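/- Duality of Potts partition functions: for a finite connected planar graph G with dual G^D, Z(G; q, v) = q^{1-|F|} v^{|E|} · Z(G^D; q, q/v), where Z(G; q, v) = Σ_{S ⊆ E} v^{|S|} q^{p(S)} and |F| is the number of faces of G. -/

import Mathlib

/-!
Combinatorial-map framework for planar graph duality.  A finite connected graph
embedded in a surface is encoded by its dart set `D`, the vertex rotation `σ`
and the fixed-point-free edge involution `α`; vertices, edges and faces are the
orbits of `σ`, `α` and `α ∘ σ` respectively.  The map is planar (genus 0) iff
it is connected and satisfies Euler's relation `|V| + |F| = |E| + 2`.  The dual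
map is obtained by exchanging the roles of the vertex and face permutations;
it keeps the same darts and the same edge involution, so edges of the map and
of its dual are canonically identified.
-/

structure CombMap where
  D : Type
  [fintypeD : Fintype D]
  [decD : DecidableEq D]
  σ : Equiv.Perm D
  α : Equiv.Perm D
  hinvol : ∀ d, α (α d) = d
  hfree : ∀ d, α d ≠ d

attribute [instance] CombMap.fintypeD CombMap.decD

namespace CombMap

variable (M : CombMap)

/-- orbit relation of a permutation -/
def orbitRel (f : Equiv.Perm M.D) (a b : M.D) : Prop := b = f a

/-- number of vertices: orbits of `σ` -/
noncomputable def nV : ℕ := Nat.card (Quot (M.orbitRel M.σ))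

/-- number of edges: orbits of the involution `α` -/
noncomputable def nE : ℕ := Nat.card (Quot (M.orbitRel M.α))

/-- number of faces: orbits of the face permutation `σ ∘ α` -/
noncomputable def nF : ℕ := Nat.card (Quot (M.orbitRel (M.α.trans M.σ)))

/-- the map is connected -/
def Connected : Prop :=
  ∀ a b : M.D, Relation.EqvGen (fun x y => y = M.σ x ∨ y = M.α x) a b

/-- planar = connected of genus `0`, i.e. Euler's relation holds -/
def Planar : Prop := M.Connected ∧ M.nV + M.nF = M.nE + 2

/-- the dual map: the face permutation becomes the vertex permutation -/
def dual : CombMap where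
  D := M.D
  σ := M.α.trans M.σ
  α := M.α
  hinvol := M.hinvol
  hfree := M.hfree

/-- an edge: an unordered pair `{d, α d}` of darts -/
def Edge : Type := {p : Finset M.D // ∃ d : M.D, p = {d, M.α d}}

noncomputable instance : Fintype M.Edge := by
  classical exact Subtype.fintype _

instance : DecidableEq M.Edge := Subtype.instDecidableEq

/-- the darts belonging to an edge set -/
def darts (S : Finset M.Edge) : Set M.D := {d | ∃ p ∈ S, d ∈ p.val}

/-- `p S`: the number of connected components of the spanning subgraph of the
map with edge set `S`: darts are identified along vertex rotations and along
the involution for darts belonging to `S`. -/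
noncomputable def pS (S : Finset M.Edge) : ℕ :=
  Nat.card (Quot (fun a b : M.D =>
    b = M.σ a ∨ (a ∈ M.darts S ∧ b = M.α a)))

/-- `p(S^D)`: the number of connected components of the spanning subgraph of
the dual map whose edge set is the complement `Sᶜ` (an edge of the dual lies in
`S^D` iff its dual edge is not in `S`). -/
noncomputable def pSdual (S : Finset M.Edge) : ℕ :=
  Nat.card (Quot (fun a b : M.D =>
    b = M.σ (M.α a) ∨ (a ∈ M.darts Sᶜ ∧ b = M.α a)))

/-- the Fortuin–Kasteleyn partition function `Z(M; q, v)` -/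
noncomputable def Z (F : Type) [Field F] (q v : F) : F :=
  ∑ S : Finset M.Edge, v ^ S.card * q ^ M.pS S

end CombMap


/-! ### Auxiliary generic lemmas on cardinalities of quotients -/

section QuotCard

set_option linter.unusedSectionVars false

open Relation

variable {X : Type} [Finite X]

/-- EqvGen is idempotent-monotone. -/
theorem eqvGen_mono' {r s : X → X → Prop} (h : ∀ a b, r a b → EqvGen s a b) :
    ∀ a b, EqvGen r a b → EqvGen s a b := by
  intro a b hab
  induction hab with
  | rel a b h' => exact h _ _ h'
  | refl a => exact EqvGen.refl _
  | symm a b _ ih => exact EqvGen.symm _ _ ih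
  | trans a b c _ _ ih1 ih2 => exact EqvGen.trans _ _ _ ih1 ih2

theorem card_quot_le {r r' : X → X → Prop} (h : ∀ a b, r a b → EqvGen r' a b) :
    Nat.card (Quot r') ≤ Nat.card (Quot r) := by
  apply Nat.card_le_card_of_surjective
    (Quot.lift (Quot.mk r') (fun a b hab => Quot.eqvGen_sound (h a b hab)))
  intro q
  obtain ⟨a, rfl⟩ := Quot.exists_rep q
  exact ⟨Quot.mk r a, rfl⟩

theorem card_quot_eq {r r' : X → X → Prop} (h : ∀ a b, r a b → EqvGen r' a b)
    (h' : ∀ a b, r' a b → EqvGen r a b) :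
    Nat.card (Quot r) = Nat.card (Quot r') :=
  le_antisymm (card_quot_le h') (card_quot_le h)

/-- Structure of the equivalence generated by `r' ∪ {(x,y),(y,x)}`. -/
theorem eqvGen_extra_cases {r r' : X → X → Prop} {x y : X}
    (h : ∀ a b, r a b → r' a b ∨ (a = x ∧ b = y) ∨ (a = y ∧ b = x)) :
    ∀ a b, EqvGen r a b → EqvGen r' a b ∨
      (EqvGen r' a x ∧ EqvGen r' y b) ∨ (EqvGen r' a y ∧ EqvGen r' x b) := by
  intro a b hab
  induction hab with
  | rel a b h' =>
    rcases h a b h' with h1 | ⟨rfl, rfl⟩ | ⟨rfl, rfl⟩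
    · exact Or.inl (EqvGen.rel _ _ h1)
    · exact Or.inr (Or.inl ⟨EqvGen.refl _, EqvGen.refl _⟩)
    · exact Or.inr (Or.inr ⟨EqvGen.refl _, EqvGen.refl _⟩)
  | refl a => exact Or.inl (EqvGen.refl _)
  | symm a b _ ih =>
    rcases ih with h1 | ⟨h1, h2⟩ | ⟨h1, h2⟩
    · exact Or.inl (EqvGen.symm _ _ h1)
    · exact Or.inr (Or.inr ⟨EqvGen.symm _ _ h2, EqvGen.symm _ _ h1⟩)
    · exact Or.inr (Or.inl ⟨EqvGen.symm _ _ h2, EqvGen.symm _ _ h1⟩)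
  | trans a b c _ _ ih1 ih2 =>
    rcases ih1 with h1 | ⟨h1, h2⟩ | ⟨h1, h2⟩
    · rcases ih2 with h3 | ⟨h3, h4⟩ | ⟨h3, h4⟩
      · exact Or.inl (EqvGen.trans _ _ _ h1 h3)
      · exact Or.inr (Or.inl ⟨EqvGen.trans _ _ _ h1 h3, h4⟩)
      · exact Or.inr (Or.inr ⟨EqvGen.trans _ _ _ h1 h3, h4⟩)
    · rcases ih2 with h3 | ⟨h3, h4⟩ | ⟨h3, h4⟩
      · exact Or.inr (Or.inl ⟨h1, EqvGen.trans _ _ _ h2 h3⟩)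
      · -- a~x, y~b, b~x, y~c : a ~ x ~ y ~ c
        exact Or.inl (EqvGen.trans _ _ _ h1 (EqvGen.trans _ _ _
          (EqvGen.symm _ _ (EqvGen.trans _ _ _ h2 h3)) h4))
      · -- a~x, y~b, b~y, x~c : a ~ x ~ c
        exact Or.inl (EqvGen.trans _ _ _ h1 h4)
    · rcases ih2 with h3 | ⟨h3, h4⟩ | ⟨h3, h4⟩
      · exact Or.inr (Or.inr ⟨h1, EqvGen.trans _ _ _ h2 h3⟩)
      · -- a~y, x~b, b~x, y~c : a ~ y ~ c
        exact Or.inl (EqvGen.trans _ _ _ h1 h4)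
      · -- a~y, x~b, b~y, x~c : a ~ y ~ x ~ c
        exact Or.inl (EqvGen.trans _ _ _ h1 (EqvGen.trans _ _ _
          (EqvGen.symm _ _ (EqvGen.trans _ _ _ h2 h3)) h4))

/-- Adding one extra symmetric pair to a relation increases the number of
equivalence classes of the quotient by at most one (going to the smaller
relation). -/
theorem card_quot_le_succ {r r' : X → X → Prop} {x y : X}
    (h1 : ∀ a b, r' a b → EqvGen r a b)
    (h2 : ∀ a b, r a b → r' a b ∨ (a = x ∧ b = y) ∨ (a = y ∧ b = x)) :
    Nat.card (Quot r') ≤ Nat.card (Quot r) + 1 := by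
  classical
  have : ∀ p : Prop, Decidable p := fun p => Classical.propDecidable p
  set f : Quot r' → Quot r :=
    Quot.lift (Quot.mk r) (fun a b hab => Quot.eqvGen_sound (h1 a b hab)) with hf
  have key : ∀ q1 q2 : Quot r', f q1 = f q2 →
      q1 = q2 ∨ (q1 = Quot.mk r' x ∧ q2 = Quot.mk r' y) ∨
      (q1 = Quot.mk r' y ∧ q2 = Quot.mk r' x) := by
    intro q1 q2
    induction q1 using Quot.ind with | _ a =>
    induction q2 using Quot.ind with | _ b =>
    intro hab
    have hab' : EqvGen r a b := Quot.eqvGen_exact hab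
    rcases eqvGen_extra_cases h2 a b hab' with h' | ⟨ha, hb⟩ | ⟨ha, hb⟩
    · exact Or.inl (Quot.eqvGen_sound h')
    · exact Or.inr (Or.inl ⟨Quot.eqvGen_sound ha,
        (Quot.eqvGen_sound hb).symm⟩)
    · exact Or.inr (Or.inr ⟨Quot.eqvGen_sound ha,
        (Quot.eqvGen_sound hb).symm⟩)
  set g : Quot r' → Option (Quot r) :=
    fun q => if q = Quot.mk r' y then none else some (f q) with hg
  have hginj : Function.Injective g := by
    intro q1 q2 hq
    by_cases hq1 : q1 = Quot.mk r' y <;> by_cases hq2 : q2 = Quot.mk r' y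
    · rw [hq1, hq2]
    · simp [hg, hq1, hq2] at hq
    · simp [hg, hq1, hq2] at hq
    · simp only [hg, if_neg hq1, if_neg hq2, Option.some.injEq] at hq
      rcases key q1 q2 hq with h' | ⟨ha, hb⟩ | ⟨ha, hb⟩
      · exact h'
      · exact absurd hb hq2
      · exact absurd ha hq1
  have : Fintype (Quot r) := Fintype.ofFinite _
  calc Nat.card (Quot r') ≤ Nat.card (Option (Quot r)) :=
        Nat.card_le_card_of_injective g hginj
    _ = Nat.card (Quot r) + 1 := Finite.card_option

theorem card_quot_eq_of_extra {r r' : X → X → Prop} {x y : X}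
    (h1 : ∀ a b, r' a b → EqvGen r a b)
    (h2 : ∀ a b, r a b → r' a b ∨ (a = x ∧ b = y) ∨ (a = y ∧ b = x))
    (hxy : EqvGen r' x y) :
    Nat.card (Quot r') = Nat.card (Quot r) := by
  refine card_quot_eq h1 ?_
  intro a b hab
  rcases h2 a b hab with h' | ⟨rfl, rfl⟩ | ⟨rfl, rfl⟩
  · exact Relation.EqvGen.rel _ _ h'
  · exact hxy
  · exact Relation.EqvGen.symm _ _ hxy

end QuotCard

namespace CombMap

open Relation

variable (M : CombMap)

/-- the canonical edge containing a dart -/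
def edgeOf (d : M.D) : M.Edge := ⟨{d, M.α d}, d, rfl⟩

lemma edgeOf_alpha (d : M.D) : M.edgeOf (M.α d) = M.edgeOf d := by
  apply Subtype.ext
  show ({M.α d, M.α (M.α d)} : Finset M.D) = {d, M.α d}
  rw [M.hinvol d, Finset.pair_comm]

lemma mem_darts {S : Finset M.Edge} {x : M.D} : x ∈ M.darts S ↔ M.edgeOf x ∈ S := by
  constructor
  · rintro ⟨p, hp, hx⟩
    obtain ⟨d, hd⟩ := p.2
    have hx' : x = d ∨ x = M.α d := by
      rw [hd] at hx
      simpa using hx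
    have hpe : M.edgeOf x = p := by
      rcases hx' with rfl | rfl
      · exact Subtype.ext hd.symm
      · rw [M.edgeOf_alpha d]
        exact Subtype.ext hd.symm
    rwa [hpe]
  · intro h
    exact ⟨M.edgeOf x, h, by simp [edgeOf]⟩

/-- the relation whose quotient counts primal components -/
def Rp (S : Finset M.Edge) : M.D → M.D → Prop :=
  fun a b => b = M.σ a ∨ (a ∈ M.darts S ∧ b = M.α a)

/-- the relation whose quotient counts dual components -/
def Rd (T : Finset M.Edge) : M.D → M.D → Prop :=
  fun a b => b = M.σ (M.α a) ∨ (a ∈ M.darts T ∧ b = M.α a)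

lemma pS_def (S : Finset M.Edge) : M.pS S = Nat.card (Quot (M.Rp S)) := rfl
lemma pSdual_def (S : Finset M.Edge) : M.pSdual S = Nat.card (Quot (M.Rd Sᶜ)) := rfl
lemma dual_pS (T : Finset M.Edge) : M.dual.pS T = Nat.card (Quot (M.Rd T)) := rfl

lemma mem_darts_insert {e : M.Edge} {S : Finset M.Edge} {d : M.D}
    (hd : M.edgeOf d = e) {a : M.D} :
    a ∈ M.darts (insert e S) ↔ a ∈ M.darts S ∨ a = d ∨ a = M.α d := by
  rw [mem_darts, mem_darts, Finset.mem_insert]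
  constructor
  · rintro (he | hS)
    · right
      have : a ∈ ({d, M.α d} : Finset M.D) := by
        have h1 : a ∈ ({a, M.α a} : Finset M.D) := by simp
        have h2 : ({a, M.α a} : Finset M.D) = {d, M.α d} := by
          have := congrArg Subtype.val (he.trans hd.symm)
          exact this
        rwa [h2] at h1
      simpa using this
    · exact Or.inl hS
  · rintro (hS | rfl | rfl)
    · exact Or.inr hS
    · exact Or.inl hd
    · exact Or.inl ((M.edgeOf_alpha d).trans hd)

lemma mem_darts_compl {e : M.Edge} {S : Finset M.Edge} {d : M.D}
    (hd : M.edgeOf d = e) (he : e ∉ S) {a : M.D} :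
    a ∈ M.darts Sᶜ ↔ a ∈ M.darts ((insert e S)ᶜ) ∨ a = d ∨ a = M.α d := by
  rw [mem_darts, mem_darts, Finset.mem_compl, Finset.mem_compl, Finset.mem_insert]
  constructor
  · intro hS
    by_cases hae : M.edgeOf a = e
    · right
      have : a ∈ ({d, M.α d} : Finset M.D) := by
        have h1 : a ∈ ({a, M.α a} : Finset M.D) := by simp
        have h2 : ({a, M.α a} : Finset M.D) = {d, M.α d} := by
          exact congrArg Subtype.val (hae.trans hd.symm)
        rwa [h2] at h1
      simpa using this
    · exact Or.inl (by tauto)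
  · rintro (h | rfl | rfl)
    · tauto
    · rwa [hd]
    · rwa [M.edgeOf_alpha d, hd]

/-- THE KEY TOPOLOGICAL LEMMA: if the two darts of an edge `e ∉ S` are not
connected in the primal subgraph with edge set `S`, then they are connected in
the dual subgraph with edge set `(insert e S)ᶜ`. -/
lemma key_lemma {e : M.Edge} {S : Finset M.Edge} {d : M.D}
    (hd : M.edgeOf d = e) (he : e ∉ S)
    (hcon : ¬ EqvGen (M.Rp S) d (M.α d)) :
    EqvGen (M.Rd ((insert e S)ᶜ)) d (M.α d) := by
  classical
  -- the boundary-walk permutation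
  set b : M.D → M.D := fun x => if M.edgeOf x ∈ S then M.α x else x with hb
  have hbinv : Function.Involutive b := by
    intro x
    by_cases hx : M.edgeOf x ∈ S
    · have hx' : M.edgeOf (M.α x) ∈ S := by rwa [M.edgeOf_alpha x]
      simp [hb, hx, hx', M.hinvol x]
    · simp [hb, hx]
  set t : M.D → M.D := fun x => M.σ (b x) with ht
  set tE : Equiv.Perm M.D := (hbinv.toPerm b).trans M.σ with htE
  have htEapp : ∀ x, tE x = t x := fun x => rfl
  -- step 1 : t preserves primal components
  have hstep1 : ∀ x, EqvGen (M.Rp S) x (t x) := by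
    intro x
    by_cases hx : M.edgeOf x ∈ S
    · have h1 : M.Rp S x (M.α x) := Or.inr ⟨M.mem_darts.mpr hx, rfl⟩
      have h2 : M.Rp S (M.α x) (M.σ (M.α x)) := Or.inl rfl
      have : t x = M.σ (M.α x) := by simp [ht, hb, hx]
      rw [this]
      exact EqvGen.trans _ _ _ (EqvGen.rel _ _ h1) (EqvGen.rel _ _ h2)
    · have : t x = M.σ x := by simp [ht, hb, hx]
      rw [this]
      exact EqvGen.rel _ _ (Or.inl rfl)
  have horb1 : ∀ n, EqvGen (M.Rp S) (M.α d) (t^[n] (M.α d)) := by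
    intro n
    induction n with
    | zero => exact EqvGen.refl _
    | succ n ih =>
      rw [Function.iterate_succ_apply']
      exact EqvGen.trans _ _ _ ih (hstep1 _)
  -- step 2 : away from `d, α d`, the boundary walk stays in a dual component
  have hstep2 : ∀ x, x ≠ d → x ≠ M.α d →
      EqvGen (M.Rd ((insert e S)ᶜ)) x (t x) := by
    intro x hxd hxad
    by_cases hx : M.edgeOf x ∈ S
    · have : t x = M.σ (M.α x) := by simp [ht, hb, hx]
      rw [this]
      exact EqvGen.rel _ _ (Or.inl rfl)
    · have htx : t x = M.σ x := by simp [ht, hb, hx]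
      have hxe : M.edgeOf x ≠ e := by
        intro hxe
        have : x ∈ ({d, M.α d} : Finset M.D) := by
          have h1 : x ∈ ({x, M.α x} : Finset M.D) := by simp
          have h2 : ({x, M.α x} : Finset M.D) = {d, M.α d} :=
            congrArg Subtype.val (hxe.trans hd.symm)
          rwa [h2] at h1
        rcases Finset.mem_insert.mp this with h | h
        · exact hxd h
        · exact hxad (by simpa using h)
      have hmem : x ∈ M.darts ((insert e S)ᶜ) := by
        rw [mem_darts, Finset.mem_compl, Finset.mem_insert]
        tauto
      have h1 : M.Rd ((insert e S)ᶜ) x (M.α x) := Or.inr ⟨hmem, rfl⟩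
      have h2 : M.Rd ((insert e S)ᶜ) (M.α x) (M.σ x) := by
        left
        rw [M.hinvol x]
      rw [htx]
      exact EqvGen.trans _ _ _ (EqvGen.rel _ _ h1) (EqvGen.rel _ _ h2)
  -- the orbit of `α d` under `t` is periodic
  have hper : (M.α d) ∈ Function.periodicPts t := by
    rw [Function.mem_periodicPts]
    refine ⟨orderOf tE, orderOf_pos tE, ?_⟩
    show t^[orderOf tE] (M.α d) = M.α d
    have : t^[orderOf tE] = ⇑(tE ^ orderOf tE) := by
      rw [← Equiv.Perm.iterate_eq_pow]
      rfl
    rw [this, pow_orderOf_eq_one tE]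
    rfl
  set k := Function.minimalPeriod t (M.α d) with hk
  have hkpos : 0 < k := Function.minimalPeriod_pos_of_mem_periodicPts hper
  have hkfix : t^[k] (M.α d) = M.α d := Function.iterate_minimalPeriod
  -- the orbit never visits `d`
  have hno_d : ∀ n, t^[n] (M.α d) ≠ d := by
    intro n hn
    have h' := horb1 n
    rw [hn] at h'
    exact hcon (EqvGen.symm _ _ h')
  -- the orbit visits `α d` only at multiples of the period
  have hno_ad : ∀ i, 1 ≤ i → i < k → t^[i] (M.α d) ≠ M.α d := by
    intro i h1 h2 hfix
    exact Function.not_isPeriodicPt_of_pos_of_lt_minimalPeriod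
      (by omega) h2 hfix
  -- chain in the dual component from `t (α d)` back to `α d`
  have hchain : ∀ j i, i + j = k → 1 ≤ i →
      EqvGen (M.Rd ((insert e S)ᶜ)) (t^[i] (M.α d)) (M.α d) := by
    intro j
    induction j with
    | zero =>
      intro i hi _
      have : i = k := by omega
      rw [this, hkfix]
      exact EqvGen.refl _
    | succ j ih =>
      intro i hi h1
      have hlt : i < k := by omega
      have hx1 : t^[i] (M.α d) ≠ d := hno_d i
      have hx2 : t^[i] (M.α d) ≠ M.α d := hno_ad i h1 hlt
      have hnext : EqvGen (M.Rd ((insert e S)ᶜ)) (t^[i] (M.α d)) (t^[i+1] (M.α d)) := by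
        rw [Function.iterate_succ_apply']
        exact hstep2 _ hx1 hx2
      exact EqvGen.trans _ _ _ hnext (ih (i + 1) (by omega) (by omega))
  have hchain1 : EqvGen (M.Rd ((insert e S)ᶜ)) (t^[1] (M.α d)) (M.α d) :=
    hchain (k - 1) 1 (by omega) le_rfl
  -- finally : d ~ σ (α d) = t (α d) ~ α d
  have hbad : b (M.α d) = M.α d := by
    have : M.edgeOf (M.α d) ∉ S := by rw [M.edgeOf_alpha d, hd]; exact he
    simp [hb, this]
  have htad : t^[1] (M.α d) = M.σ (M.α d) := by
    simp [ht, hbad]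
  have hfirst : M.Rd ((insert e S)ᶜ) d (M.σ (M.α d)) := Or.inl rfl
  rw [htad] at hchain1
  exact EqvGen.trans _ _ _ (EqvGen.rel _ _ hfirst) hchain1

/-- the crucial submodularity step: adding one edge to `S` either merges two
primal components (and then leaves the dual components unchanged) or leaves
the primal components unchanged (and then splits one dual component). -/
lemma step (S : Finset M.Edge) (e : M.Edge) (he : e ∉ S) :
    M.pS S + M.pSdual (insert e S) ≤ M.pS (insert e S) + 1 + M.pSdual S := by
  classical
  obtain ⟨d, hdval⟩ := e.2
  have hd : M.edgeOf d = e := Subtype.ext hdval.symm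
  -- characterizations of the two relations
  have hRp : ∀ a b, M.Rp (insert e S) a b →
      M.Rp S a b ∨ (a = d ∧ b = M.α d) ∨ (a = M.α d ∧ b = d) := by
    rintro a b (hb | ⟨ha, hb⟩)
    · exact Or.inl (Or.inl hb)
    · rcases (M.mem_darts_insert hd).mp ha with h | rfl | rfl
      · exact Or.inl (Or.inr ⟨h, hb⟩)
      · exact Or.inr (Or.inl ⟨rfl, hb⟩)
      · exact Or.inr (Or.inr ⟨rfl, hb.trans (M.hinvol d)⟩)
  have hRp' : ∀ a b, M.Rp S a b → EqvGen (M.Rp (insert e S)) a b := by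
    rintro a b (hb | ⟨ha, hb⟩)
    · exact EqvGen.rel _ _ (Or.inl hb)
    · refine EqvGen.rel _ _ (Or.inr ⟨?_, hb⟩)
      rw [mem_darts] at ha ⊢
      exact Finset.mem_insert_of_mem ha
  have hRd : ∀ a b, M.Rd Sᶜ a b →
      M.Rd ((insert e S)ᶜ) a b ∨ (a = d ∧ b = M.α d) ∨ (a = M.α d ∧ b = d) := by
    rintro a b (hb | ⟨ha, hb⟩)
    · exact Or.inl (Or.inl hb)
    · rcases (M.mem_darts_compl hd he).mp ha with h | rfl | rfl
      · exact Or.inl (Or.inr ⟨h, hb⟩)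
      · exact Or.inr (Or.inl ⟨rfl, hb⟩)
      · exact Or.inr (Or.inr ⟨rfl, hb.trans (M.hinvol d)⟩)
  have hRd' : ∀ a b, M.Rd ((insert e S)ᶜ) a b → EqvGen (M.Rd Sᶜ) a b := by
    rintro a b (hb | ⟨ha, hb⟩)
    · exact EqvGen.rel _ _ (Or.inl hb)
    · refine EqvGen.rel _ _ (Or.inr ⟨?_, hb⟩)
      rw [mem_darts, Finset.mem_compl] at ha ⊢
      intro hmem
      exact ha (Finset.mem_insert_of_mem hmem)
  by_cases hcon : EqvGen (M.Rp S) d (M.α d)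
  · have h1 : M.pS S = M.pS (insert e S) := by
      rw [pS_def, pS_def]
      exact card_quot_eq_of_extra hRp' hRp hcon
    have h2 : M.pSdual (insert e S) ≤ M.pSdual S + 1 := by
      rw [pSdual_def, pSdual_def]
      exact card_quot_le_succ hRd' hRd
    omega
  · have hkey := M.key_lemma hd he hcon
    have h1 : M.pSdual (insert e S) = M.pSdual S := by
      rw [pSdual_def, pSdual_def]
      exact card_quot_eq_of_extra hRd' hRd hkey
    have h2 : M.pS S ≤ M.pS (insert e S) + 1 := by
      rw [pS_def, pS_def]
      exact card_quot_le_succ hRp' hRp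
    omega

lemma pS_empty : M.pS ∅ = M.nV := by
  rw [pS_def, nV]
  refine card_quot_eq ?_ ?_
  · rintro a b (hb | ⟨ha, _⟩)
    · exact EqvGen.rel _ _ hb
    · rw [mem_darts] at ha
      exact absurd ha (Finset.notMem_empty _)
  · intro a b hb
    exact EqvGen.rel _ _ (Or.inl hb)

lemma pSdual_univ : M.pSdual Finset.univ = M.nF := by
  rw [pSdual_def, nF]
  refine card_quot_eq ?_ ?_
  · rintro a b (hb | ⟨ha, _⟩)
    · exact EqvGen.rel _ _ hb
    · rw [mem_darts, Finset.mem_compl] at ha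
      exact absurd (Finset.mem_univ _) ha
  · intro a b hb
    exact EqvGen.rel _ _ (Or.inl hb)

lemma pS_univ (hc : M.Connected) (hne : Nonempty M.D) : M.pS Finset.univ = 1 := by
  rw [pS_def]
  rw [Nat.card_eq_one_iff_unique]
  constructor
  · constructor
    intro q1 q2
    induction q1 using Quot.ind with | _ a =>
    induction q2 using Quot.ind with | _ b =>
    apply Quot.eqvGen_sound
    refine eqvGen_mono' ?_ a b (hc a b)
    rintro x y (hy | hy)
    · exact EqvGen.rel _ _ (Or.inl hy)
    · exact EqvGen.rel _ _ (Or.inr ⟨M.mem_darts.mpr (Finset.mem_univ _), hy⟩)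
  · obtain ⟨a⟩ := hne
    exact ⟨Quot.mk _ a⟩

lemma pSdual_empty (hc : M.Connected) (hne : Nonempty M.D) : M.pSdual ∅ = 1 := by
  rw [pSdual_def]
  rw [Nat.card_eq_one_iff_unique]
  have hmem : ∀ x : M.D, x ∈ M.darts (∅ᶜ : Finset M.Edge) := by
    intro x
    rw [mem_darts, Finset.mem_compl]
    exact Finset.notMem_empty _
  constructor
  · constructor
    intro q1 q2
    induction q1 using Quot.ind with | _ a =>
    induction q2 using Quot.ind with | _ b =>
    apply Quot.eqvGen_sound
    refine eqvGen_mono' ?_ a b (hc a b)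
    rintro x y (hy | hy)
    · -- y = σ x : x ~ α x ~ σ (α (α x)) = σ x
      have h1 : M.Rd (∅ᶜ : Finset M.Edge) x (M.α x) := Or.inr ⟨hmem x, rfl⟩
      have h2 : M.Rd (∅ᶜ : Finset M.Edge) (M.α x) (M.σ x) := by
        left
        rw [M.hinvol x]
      rw [hy]
      exact EqvGen.trans _ _ _ (EqvGen.rel _ _ h1) (EqvGen.rel _ _ h2)
    · exact EqvGen.rel _ _ (Or.inr ⟨hmem x, hy⟩)
  · obtain ⟨a⟩ := hne
    exact ⟨Quot.mk _ a⟩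

lemma card_edge : Fintype.card M.Edge = M.nE := by
  rw [nE, ← Nat.card_eq_fintype_card]
  symm
  apply Nat.card_eq_of_bijective
    (Quot.lift M.edgeOf (fun a b (h : b = M.α a) => by rw [h, M.edgeOf_alpha a]))
  constructor
  · intro q1 q2
    induction q1 using Quot.ind with | _ a =>
    induction q2 using Quot.ind with | _ b =>
    intro hab
    have hval : ({a, M.α a} : Finset M.D) = {b, M.α b} := congrArg Subtype.val hab
    have : a ∈ ({b, M.α b} : Finset M.D) := by
      rw [← hval]; simp
    rcases Finset.mem_insert.mp this with rfl | h
    · rfl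
    · have : a = M.α b := by simpa using h
      subst this
      exact Eq.symm (Quot.sound rfl)
  · intro e
    obtain ⟨d, hdval⟩ := e.2
    exact ⟨Quot.mk _ d, Subtype.ext hdval.symm⟩

lemma nonempty_darts (hEuler : M.nV + M.nF = M.nE + 2) : Nonempty M.D := by
  by_contra h
  rw [not_nonempty_iff] at h
  have hq : ∀ r : M.D → M.D → Prop, Nat.card (Quot r) = 0 := by
    intro r
    have : IsEmpty (Quot r) := ⟨by
      intro q
      obtain ⟨a, -⟩ := Quot.exists_rep q
      exact h.elim a⟩
    exact Nat.card_of_isEmpty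
  have h1 : M.nV = 0 := hq _
  have h2 : M.nF = 0 := hq _
  have h3 : M.nE = 0 := hq _
  omega

/-- the main combinatorial identity `p(S) + |S| + 1 = |V| + p(S^D)` -/
lemma main_identity (hM : M.Planar) (S : Finset M.Edge) :
    M.pS S + S.card + 1 = M.nV + M.pSdual S := by
  classical
  obtain ⟨hc, hEuler⟩ := hM
  have hne := M.nonempty_darts hEuler
  have low : ∀ S : Finset M.Edge,
      M.pS ∅ + M.pSdual S ≤ M.pS S + S.card + M.pSdual ∅ := by
    intro S
    induction S using Finset.induction_on with
    | empty => simp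
    | insert e S' he ih =>
      have hstep := M.step S' e he
      rw [Finset.card_insert_of_notMem he]
      omega
  have high : ∀ S : Finset M.Edge,
      M.pS S + S.card + M.pSdual Finset.univ ≤
        M.pS Finset.univ + (Finset.univ : Finset M.Edge).card + M.pSdual S := by
    suffices H : ∀ n (S : Finset M.Edge), Sᶜ.card = n →
        M.pS S + S.card + M.pSdual Finset.univ ≤
          M.pS Finset.univ + (Finset.univ : Finset M.Edge).card + M.pSdual S by
      intro S; exact H _ S rfl
    intro n
    induction n with
    | zero =>
      intro S h0
      have : Sᶜ = ∅ := Finset.card_eq_zero.mp h0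
      have hS : S = Finset.univ := by
        rwa [← Finset.compl_univ, compl_inj_iff] at this
      rw [hS]
    | succ n ih =>
      intro S hS
      have hne' : Sᶜ.Nonempty := Finset.card_pos.mp (by omega)
      obtain ⟨e, he⟩ := hne'
      have heS : e ∉ S := Finset.mem_compl.mp he
      have hcard : (insert e S)ᶜ.card = n := by
        rw [Finset.compl_insert, Finset.card_erase_of_mem he]
        omega
      have hih := ih (insert e S) hcard
      have hstep := M.step S e heS
      rw [Finset.card_insert_of_notMem heS] at hih
      omega
  have hl := low S
  have hh := high S
  rw [M.pS_empty, M.pSdual_empty hc hne] at hl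
  rw [M.pS_univ hc hne, M.pSdual_univ, Finset.card_univ, M.card_edge] at hh
  omega

end CombMap

/-- the per-subset algebraic identity -/
lemma term_eq {F : Type} [Field F] (q v : F) (hq : q ≠ 0) (hv : v ≠ 0)
    (s c p p' E Vn Fn : ℕ)
    (h1 : s + c = E) (h2 : p + s + 1 = Vn + p') (h3 : Vn + Fn = E + 2) :
    v ^ s * q ^ p = q ^ ((1 : ℤ) - (Fn : ℤ)) * v ^ E * ((q / v) ^ c * q ^ p') := by
  have hp : (p : ℤ) = (1 - (Fn : ℤ)) + c + p' := by omega
  have hs : (s : ℤ) = (E : ℤ) - c := by omega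
  rw [← zpow_natCast v s, ← zpow_natCast q p, ← zpow_natCast v E, ← zpow_natCast q p',
    ← zpow_natCast (q / v) c, div_zpow, hp, hs, zpow_sub₀ hv, zpow_add₀ hq, zpow_add₀ hq]
  field_simp

/-!
STATEMENT 6: duality of the Potts partition function: for a finite connected
planar graph `G` with dual `G^D`,
`Z(G; q, v) = q^{1-|F|} v^{|E|} Z(G^D; q, q/v)`.
-/
theorem partition_function_duality (M : CombMap) (hM : M.Planar)
    (F : Type) [Field F] (q v : F) (hq : q ≠ 0) (hv : v ≠ 0) :
    M.Z F q v = q ^ ((1 : ℤ) - (M.nF : ℤ)) * v ^ M.nE * M.dual.Z F q (q / v) := by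
  classical
  have hdual : M.dual.Z F q (q / v) =
      ∑ S : Finset M.Edge, (q / v) ^ Sᶜ.card * q ^ M.pSdual S := by
    have h1 : M.dual.Z F q (q / v) =
        ∑ T : Finset M.Edge, (q / v) ^ T.card * q ^ M.pSdual Tᶜ := by
      show (∑ T : Finset M.Edge, (q / v) ^ T.card * q ^ M.dual.pS T) = _
      refine Finset.sum_congr rfl fun T _ => ?_
      congr 1
      rw [M.dual_pS T, M.pSdual_def Tᶜ, compl_compl]
    rw [h1]
    refine (Fintype.sum_equiv ⟨fun S => Sᶜ, fun S => Sᶜ, compl_compl, compl_compl⟩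
      _ _ fun S => ?_).symm
    simp only [Equiv.coe_fn_mk, compl_compl]
  rw [hdual, Finset.mul_sum]
  show (∑ S : Finset M.Edge, v ^ S.card * q ^ M.pS S) = _
  refine Finset.sum_congr rfl fun S _ => ?_
  exact term_eq q v hq hv S.card Sᶜ.card (M.pS S) (M.pSdual S) M.nE M.nV M.nF
    ((Finset.card_add_card_compl S).trans M.card_edge) (M.main_identity hM S) hM.2
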